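/- Let J be an antiunitary involution on a separable Hilbert space H. Then every Hilbert–Schmidt operator T on H⊗H is J-crossable, and the restriction of Cross_J to the Hilbert–Schmidt class is a unitary operator with respect to the Hilbert–Schmidt inner product, i.e., ‖Cross_J(T)‖₂ = ‖T‖₂ for all Hilbert–Schmidt T, and Cross_J is a bijection of the Hilbert–Schmidt class. -/

import Mathlib

noncomputable section
open scoped InnerProductSpace ComplexConjugate

variable {H K : Type*}

/-- A realization of the Hilbert space tensor square of `H` on a Hilbert space `K`. -/
structure TensorSquare (H K : Type*) [NormedAddCommGroup H] [InnerProductSpace ℂ H]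
    [NormedAddCommGroup K] [InnerProductSpace ℂ K] : Type _ where
  tmul : H → H → K
  tmul_add_left : ∀ a a' b, tmul (a + a') b = tmul a b + tmul a' b
  tmul_add_right : ∀ a b b', tmul a (b + b') = tmul a b + tmul a b'
  tmul_smul_left : ∀ (c : ℂ) a b, tmul (c • a) b = c • tmul a b
  tmul_smul_right : ∀ (c : ℂ) a b, tmul a (c • b) = c • tmul a b
  inner_tmul : ∀ a b c d, ⟪tmul a b, tmul c d⟫_ℂ = ⟪a, c⟫_ℂ * ⟪b, d⟫_ℂ
  dense_span : Dense (↑(Submodule.span ℂ (Set.range fun p : H × H => tmul p.1 p.2)) : Set K)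

/-- A densely defined closed antilinear involution `S` on `H`, together with its adjoint `S*`. -/
structure AntiInvolution (H : Type*) [NormedAddCommGroup H] [InnerProductSpace ℂ H] : Type _ where
  dom : Submodule ℂ H
  toFun : H → H
  dense_dom : Dense (dom : Set H)
  map_add : ∀ x ∈ dom, ∀ y ∈ dom, toFun (x + y) = toFun x + toFun y
  map_smul : ∀ (c : ℂ), ∀ x ∈ dom, toFun (c • x) = (starRingEnd ℂ c) • toFun x
  invol_mem : ∀ x ∈ dom, toFun x ∈ dom
  invol : ∀ x ∈ dom, toFun (toFun x) = x
  closed_graph : IsClosed {p : H × H | p.1 ∈ dom ∧ toFun p.1 = p.2}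
  adjDom : Submodule ℂ H
  adjFun : H → H
  dense_adjDom : Dense (adjDom : Set H)
  adj_spec : ∀ y ∈ adjDom, ∀ x ∈ dom, ⟪adjFun y, x⟫_ℂ = ⟪toFun x, y⟫_ℂ
  adj_max : ∀ y z : H, (∀ x ∈ dom, ⟪z, x⟫_ℂ = ⟪toFun x, y⟫_ℂ) → y ∈ adjDom

section
variable [NormedAddCommGroup H] [InnerProductSpace ℂ H]
  [NormedAddCommGroup K] [InnerProductSpace ℂ K]

/-- The crossing relation (unbounded `S`): `Tc = Cross_S(T)`. -/
def CrossRelU (τ : TensorSquare H K) (S : AntiInvolution H) (T Tc : K →L[ℂ] K) : Prop :=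
  ∀ φ₁ ∈ S.dom, ∀ ψ₁ ∈ S.dom, ∀ φ₂ ∈ S.adjDom, ∀ ψ₂ ∈ S.adjDom,
    ⟪τ.tmul φ₁ φ₂, Tc (τ.tmul ψ₁ ψ₂)⟫_ℂ
      = ⟪τ.tmul φ₂ (S.adjFun ψ₂), T (τ.tmul (S.toFun φ₁) ψ₁)⟫_ℂ

/-- The crossing relation for an everywhere defined (bounded) antilinear involution `S`
with adjoint `Sstar`. -/
def CrossRelB (τ : TensorSquare H K) (S Sstar : H →SL[starRingEnd ℂ] H) (T Tc : K →L[ℂ] K) :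
    Prop :=
  ∀ φ₁ φ₂ ψ₁ ψ₂ : H,
    ⟪τ.tmul φ₁ φ₂, Tc (τ.tmul ψ₁ ψ₂)⟫_ℂ = ⟪τ.tmul φ₂ (Sstar ψ₂), T (τ.tmul (S φ₁) ψ₁)⟫_ℂ

end


section Aux
open scoped ENNReal

universe u v

variable {H : Type u} {K : Type v} [NormedAddCommGroup H] [InnerProductSpace ℂ H]
  [NormedAddCommGroup K] [InnerProductSpace ℂ K]

section JBasis
variable [CompleteSpace H]


omit [CompleteSpace H] in
lemma inner_real_of_fixed (J : H →SL[starRingEnd ℂ] H)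
    (hJanti : ∀ x y : H, ⟪J x, J y⟫_ℂ = ⟪y, x⟫_ℂ)
    {x y : H} (hx : J x = x) (hy : J y = y) : (⟪x, y⟫_ℂ : ℂ) = (((⟪x, y⟫_ℂ).re : ℝ) : ℂ) := by
  have h : (starRingEnd ℂ) ⟪x, y⟫_ℂ = ⟪x, y⟫_ℂ := by
    rw [inner_conj_symm, ← hJanti x y, hx, hy]
  exact (Complex.conj_eq_iff_re.mp h).symm

lemma exists_J_fixed_basis (J : H →SL[starRingEnd ℂ] H)
    (hJinv : ∀ x : H, J (J x) = x)
    (hJanti : ∀ x y : H, ⟪J x, J y⟫_ℂ = ⟪y, x⟫_ℂ) :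
    ∃ (w : Type u) (b : HilbertBasis w ℂ H), ∀ i, J (b i) = b i := by
  classical
  letI : InnerProductSpace ℝ H := InnerProductSpace.rclikeToReal ℂ H
  set Hp : Submodule ℝ H :=
    { carrier := {x | J x = x}
      add_mem' := fun {a b} ha hb => by simp only [Set.mem_setOf_eq, map_add] at *; rw [ha, hb]
      zero_mem' := by simp
      smul_mem' := fun c x hx => by
        simp only [Set.mem_setOf_eq] at *
        have : J ((c : ℂ) • x) = (starRingEnd ℂ (c : ℂ)) • J x := J.map_smulₛₗ _ _
        simpa [Complex.conj_ofReal, hx] using this } with hHp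
  have hclosed : IsClosed (Hp : Set H) := isClosed_eq J.continuous continuous_id
  haveI : CompleteSpace Hp := hclosed.completeSpace_coe
  obtain ⟨w, b₀, hb₀⟩ := exists_hilbertBasis ℝ (↥Hp)
  set v : w → H := fun i => ((b₀ i : Hp) : H) with hv
  have hfix : ∀ i, J (v i) = v i := fun i => (b₀ i : Hp).2
  have hon : Orthonormal ℂ v := by
    rw [orthonormal_iff_ite]
    have h₀ := orthonormal_iff_ite.mp b₀.orthonormal
    intro i j
    rw [inner_real_of_fixed J hJanti (hfix i) (hfix j)]
    have : (⟪v i, v j⟫_ℂ).re = (⟪b₀ i, b₀ j⟫_ℝ : ℝ) := rfl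
    rw [this, h₀ i j]
    split <;> norm_num
  have hsp : ⊤ ≤ (Submodule.span ℂ (Set.range v)).topologicalClosure := by
    set V := (Submodule.span ℂ (Set.range v)).topologicalClosure with hV
    have hmem : ∀ y : H, J y = y → y ∈ V := by
      intro y hy
      have hsum := b₀.hasSum_repr (⟨y, hy⟩ : Hp)
      have hsum' : HasSum (fun i => (b₀.repr (⟨y, hy⟩ : Hp) i) • v i) y := by
        have := hsum.mapL Hp.subtypeL
        simpa using this
      refine mem_closure_of_tendsto hsum' (Filter.Eventually.of_forall fun s => ?_)
      simp only [SetLike.mem_coe]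
      refine Submodule.sum_mem _ fun i _ => ?_
      exact Submodule.smul_of_tower_mem _ _ (Submodule.subset_span ⟨i, rfl⟩)
    intro x _
    have hconj2 : (starRingEnd ℂ) (2⁻¹ : ℂ) = (2⁻¹ : ℂ) := by
      norm_num [Complex.ext_iff]
    have ha : J ((2⁻¹ : ℂ) • (x + J x)) = (2⁻¹ : ℂ) • (x + J x) := by
      rw [J.map_smulₛₗ, map_add, hJinv, hconj2, add_comm]
    have hconjI : (starRingEnd ℂ) (-(Complex.I)/2) = -(-(Complex.I)/2) := by
      rw [map_div₀, map_neg, Complex.conj_I]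
      rw [show (starRingEnd ℂ) (2:ℂ) = 2 by norm_num [Complex.ext_iff]]
      ring
    have hb : J ((-(Complex.I)/2) • (x - J x)) = (-(Complex.I)/2) • (x - J x) := by
      rw [J.map_smulₛₗ, map_sub, hJinv, hconjI, ← neg_sub x (J x), neg_smul_neg]
    have hIm : Complex.I * (-(Complex.I)/2) = 2⁻¹ := by
      rw [← mul_div_assoc, mul_neg, Complex.I_mul_I]; norm_num
    have hx : x = (2⁻¹ : ℂ) • (x + J x) + Complex.I • ((-(Complex.I)/2) • (x - J x)) := by
      rw [smul_smul, hIm]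
      module
    rw [hx]
    exact V.add_mem (hmem _ ha) (V.smul_mem _ (hmem _ hb))
  refine ⟨w, HilbertBasis.mk hon hsp, fun i => ?_⟩
  rw [HilbertBasis.coe_mk]
  exact hfix i

end JBasis

section HSEsec
variable {ι κ : Type*} [CompleteSpace K]


lemma hasSum_parseval (b : HilbertBasis ι ℂ K) (x : K) :
    HasSum (fun i => ‖⟪b i, x⟫_ℂ‖ ^ 2) (‖x‖ ^ 2) := by
  have h := (b.hasSum_inner_mul_inner x x).mapL Complex.reCLM
  have h1 : (fun i => Complex.reCLM (⟪x, b i⟫_ℂ * ⟪b i, x⟫_ℂ))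
      = fun i => ‖⟪b i, x⟫_ℂ‖ ^ 2 := by
    funext i
    rw [show ⟪x, b i⟫_ℂ = (starRingEnd ℂ) ⟪b i, x⟫_ℂ from (inner_conj_symm _ _).symm]
    rw [RCLike.conj_mul]
    simp [← Complex.ofReal_pow]
  have h2 : Complex.reCLM ⟪x, x⟫_ℂ = ‖x‖ ^ 2 := by
    simpa using inner_self_eq_norm_sq (𝕜 := ℂ) x
  rwa [h1, h2] at h

lemma tsum_ofReal_parseval (b : HilbertBasis ι ℂ K) (x : K) :
    ∑' i, ENNReal.ofReal (‖⟪b i, x⟫_ℂ‖ ^ 2) = ENNReal.ofReal (‖x‖ ^ 2) := by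
  rw [← ENNReal.ofReal_tsum_of_nonneg (fun i => sq_nonneg _) (hasSum_parseval b x).summable,
    (hasSum_parseval b x).tsum_eq]

lemma summable_iff_tsum_ofReal_ne_top {f : ι → ℝ} (hf : ∀ i, 0 ≤ f i) :
    Summable f ↔ ∑' i, ENNReal.ofReal (f i) ≠ ⊤ := by
  constructor
  · intro h
    rw [← ENNReal.ofReal_tsum_of_nonneg hf h]
    exact ENNReal.ofReal_ne_top
  · intro h
    have := ENNReal.summable_toReal h
    simpa only [ENNReal.toReal_ofReal (hf _)] using this

lemma tsum_eq_toReal_of_nonneg {f : ι → ℝ} (hf : ∀ i, 0 ≤ f i) (h : Summable f) :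
    ∑' i, f i = (∑' i, ENNReal.ofReal (f i)).toReal := by
  rw [← ENNReal.ofReal_tsum_of_nonneg hf h, ENNReal.toReal_ofReal (tsum_nonneg hf)]

/-- The Hilbert–Schmidt "sum of squares" in `ℝ≥0∞`. -/
def HSE (b : HilbertBasis ι ℂ K) (T : K →L[ℂ] K) : ℝ≥0∞ :=
  ∑' i, ENNReal.ofReal (‖T (b i)‖ ^ 2)

lemma HSE_eq_double (b : HilbertBasis ι ℂ K) (c : HilbertBasis κ ℂ K) (T : K →L[ℂ] K) :
    HSE b T = ∑' (p : ι × κ), ENNReal.ofReal (‖⟪c p.2, T (b p.1)⟫_ℂ‖ ^ 2) := by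
  rw [HSE, ENNReal.tsum_prod']
  exact tsum_congr fun i => (tsum_ofReal_parseval c (T (b i))).symm

lemma HSE_adjoint (b : HilbertBasis ι ℂ K) (c : HilbertBasis κ ℂ K) (T : K →L[ℂ] K) :
    HSE b T = HSE c (ContinuousLinearMap.adjoint T) := by
  rw [HSE_eq_double b c T, HSE_eq_double c b (ContinuousLinearMap.adjoint T)]
  rw [ENNReal.tsum_prod', ENNReal.tsum_prod', ENNReal.tsum_comm]
  refine tsum_congr fun j => tsum_congr fun i => ?_
  congr 2
  rw [← ContinuousLinearMap.adjoint_inner_left, norm_inner_symm]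

lemma HSE_basis_indep (b : HilbertBasis ι ℂ K) (c : HilbertBasis κ ℂ K) (T : K →L[ℂ] K) :
    HSE b T = HSE c T := by
  rw [HSE_adjoint b c T, HSE_adjoint c c (ContinuousLinearMap.adjoint T),
    ContinuousLinearMap.adjoint_adjoint]

end HSEsec

section OpMatrix
variable {ι : Type*} [CompleteSpace K]


/-- rank one operator `x ↦ ⟪v, x⟫ • u`. -/
def rankOne (u v : K) : K →L[ℂ] K := (innerSL ℂ v).smulRight u

omit [CompleteSpace K] in
@[simp] lemma rankOne_apply (u v x : K) : rankOne u v x = ⟪v, x⟫_ℂ • u := rfl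

omit [CompleteSpace K] in
lemma norm_sq_sum_orthonormal {v : ι → K} (hv : Orthonormal ℂ v) (s : Finset ι) (γ : ι → ℂ) :
    ‖∑ p ∈ s, γ p • v p‖ ^ 2 = ∑ p ∈ s, ‖γ p‖ ^ 2 := by
  rw [← inner_self_eq_norm_sq (𝕜 := ℂ), hv.inner_sum, map_sum]
  refine Finset.sum_congr rfl fun p _ => ?_
  rw [RCLike.conj_mul]
  simp [← Complex.ofReal_pow]

omit [CompleteSpace K] in
lemma op_sum_bound {b : ι → K} (hb : Orthonormal ℂ b) (M : ι × ι → ℂ)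
    (t : Finset (ι × ι)) :
    ‖∑ r ∈ t, M r • rankOne (b r.1) (b r.2)‖ ≤ Real.sqrt (∑ r ∈ t, ‖M r‖ ^ 2) := by
  classical
  set s₁ := t.image Prod.fst with hs₁
  set s₂ := t.image Prod.snd with hs₂
  set M₀ : ι × ι → ℂ := fun r => if r ∈ t then M r else 0 with hM₀
  have hsub : t ⊆ s₁ ×ˢ s₂ := Finset.subset_product
  have hsum_eq : ∑ r ∈ t, M r • rankOne (b r.1) (b r.2)
      = ∑ r ∈ s₁ ×ˢ s₂, M₀ r • rankOne (b r.1) (b r.2) := by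
    have h1 : ∀ r : ι × ι, M₀ r • rankOne (b r.1) (b r.2)
        = if r ∈ t then M r • rankOne (b r.1) (b r.2) else 0 := by
      intro r; by_cases hr : r ∈ t <;> simp [hM₀, hr]
    rw [Finset.sum_congr rfl fun r _ => h1 r, Finset.sum_ite_mem,
      Finset.inter_eq_right.mpr hsub]
  have hnorm_eq : ∑ r ∈ t, ‖M r‖ ^ 2 = ∑ r ∈ s₁ ×ˢ s₂, ‖M₀ r‖ ^ 2 := by
    have h1 : ∀ r : ι × ι, ‖M₀ r‖ ^ 2 = if r ∈ t then ‖M r‖ ^ 2 else 0 := by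
      intro r; by_cases hr : r ∈ t <;> simp [hM₀, hr]
    rw [Finset.sum_congr rfl fun r _ => h1 r, Finset.sum_ite_mem,
      Finset.inter_eq_right.mpr hsub]
  rw [hsum_eq, hnorm_eq]
  have hMnn : (0:ℝ) ≤ ∑ r ∈ s₁ ×ˢ s₂, ‖M₀ r‖ ^ 2 :=
    Finset.sum_nonneg fun r _ => sq_nonneg _
  refine ContinuousLinearMap.opNorm_le_bound _ (Real.sqrt_nonneg _) fun x => ?_
  set γ : ι → ℂ := fun p => ∑ q ∈ s₂, M₀ (p, q) * ⟪b q, x⟫_ℂ with hγ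
  have happ : (∑ r ∈ s₁ ×ˢ s₂, M₀ r • rankOne (b r.1) (b r.2)) x
      = ∑ p ∈ s₁, γ p • b p := by
    rw [ContinuousLinearMap.sum_apply, Finset.sum_product]
    refine Finset.sum_congr rfl fun p _ => ?_
    rw [hγ, Finset.sum_smul]
    refine Finset.sum_congr rfl fun q _ => ?_
    simp [smul_smul]
  have hbound : ‖(∑ r ∈ s₁ ×ˢ s₂, M₀ r • rankOne (b r.1) (b r.2)) x‖ ^ 2
      ≤ (∑ r ∈ s₁ ×ˢ s₂, ‖M₀ r‖ ^ 2) * ‖x‖ ^ 2 := by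
    rw [happ, norm_sq_sum_orthonormal hb]
    rw [Finset.sum_product, Finset.sum_mul]
    refine Finset.sum_le_sum fun p _ => ?_
    calc ‖γ p‖ ^ 2 ≤ (∑ q ∈ s₂, ‖M₀ (p, q)‖ * ‖⟪b q, x⟫_ℂ‖) ^ 2 := by
          have h := (norm_sum_le s₂ fun q => M₀ (p, q) * ⟪b q, x⟫_ℂ)
          refine pow_le_pow_left₀ (norm_nonneg _) ?_ 2
          refine h.trans_eq (Finset.sum_congr rfl fun q _ => norm_mul _ _)
      _ ≤ (∑ q ∈ s₂, ‖M₀ (p, q)‖ ^ 2) * ∑ q ∈ s₂, ‖⟪b q, x⟫_ℂ‖ ^ 2 :=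
          Finset.sum_mul_sq_le_sq_mul_sq s₂ _ _
      _ ≤ (∑ q ∈ s₂, ‖M₀ (p, q)‖ ^ 2) * ‖x‖ ^ 2 :=
          mul_le_mul_of_nonneg_left (hb.sum_inner_products_le x)
            (Finset.sum_nonneg fun q _ => sq_nonneg _)
  calc ‖(∑ r ∈ s₁ ×ˢ s₂, M₀ r • rankOne (b r.1) (b r.2)) x‖
      = Real.sqrt (‖(∑ r ∈ s₁ ×ˢ s₂, M₀ r • rankOne (b r.1) (b r.2)) x‖ ^ 2) :=
        (Real.sqrt_sq (norm_nonneg _)).symm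
    _ ≤ Real.sqrt ((∑ r ∈ s₁ ×ˢ s₂, ‖M₀ r‖ ^ 2) * ‖x‖ ^ 2) := Real.sqrt_le_sqrt hbound
    _ = Real.sqrt (∑ r ∈ s₁ ×ˢ s₂, ‖M₀ r‖ ^ 2) * ‖x‖ := by
        rw [Real.sqrt_mul hMnn, Real.sqrt_sq (norm_nonneg _)]

lemma summable_matrix_op {b : ι → K} (hb : Orthonormal ℂ b) {M : ι × ι → ℂ}
    (hM : Summable fun r => ‖M r‖ ^ 2) :
    Summable fun r : ι × ι => M r • rankOne (b r.1) (b r.2) := by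
  rw [summable_iff_vanishing]
  intro e he
  obtain ⟨ε, hε, hball⟩ := Metric.mem_nhds_iff.mp he
  obtain ⟨s, hs⟩ := (summable_iff_vanishing.mp hM) (Metric.ball 0 (ε ^ 2))
    (Metric.ball_mem_nhds 0 (by positivity))
  refine ⟨s, fun t ht => ?_⟩
  apply hball
  rw [Metric.mem_ball, dist_zero_right]
  have h1 := op_sum_bound hb M t
  have h2 := hs t ht
  rw [Metric.mem_ball, dist_zero_right, Real.norm_eq_abs] at h2
  have h3 : ∑ r ∈ t, ‖M r‖ ^ 2 < ε ^ 2 :=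
    lt_of_le_of_lt (le_abs_self _) h2
  calc ‖∑ r ∈ t, M r • rankOne (b r.1) (b r.2)‖
      ≤ Real.sqrt (∑ r ∈ t, ‖M r‖ ^ 2) := h1
    _ < Real.sqrt (ε ^ 2) := by
        apply Real.sqrt_lt_sqrt (Finset.sum_nonneg fun r _ => sq_nonneg _) h3
    _ = ε := Real.sqrt_sq hε.le

/-- Bounded operator with prescribed matrix in an orthonormal family. -/
def opOfMatrix (b : ι → K) (M : ι × ι → ℂ) : K →L[ℂ] K :=
  ∑' r : ι × ι, M r • rankOne (b r.1) (b r.2)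

lemma opOfMatrix_inner {b : ι → K} (hb : Orthonormal ℂ b) {M : ι × ι → ℂ}
    (hM : Summable fun r => ‖M r‖ ^ 2) (p q : ι) :
    ⟪b p, opOfMatrix b M (b q)⟫_ℂ = M (p, q) := by
  classical
  have hsum := (summable_matrix_op hb hM).hasSum
  have heval := hsum.mapL ((innerSL ℂ (b p)).comp (ContinuousLinearMap.apply ℂ K (b q)))
  have hfun : (fun r : ι × ι =>
      ((innerSL ℂ (b p)).comp (ContinuousLinearMap.apply ℂ K (b q)))
        (M r • rankOne (b r.1) (b r.2)))
      = fun r : ι × ι => if r = (p, q) then M (p, q) else 0 := by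
    funext r
    obtain ⟨r1, r2⟩ := r
    have hii := orthonormal_iff_ite.mp hb
    simp only [ContinuousLinearMap.coe_comp', Function.comp_apply,
      ContinuousLinearMap.apply_apply, ContinuousLinearMap.smul_apply, rankOne_apply,
      innerSL_apply_apply, inner_smul_right, hii, smul_eq_mul, Prod.mk.injEq]
    by_cases h1 : r1 = p
    · by_cases h2 : r2 = q
      · simp [h1, h2]
      · simp [h1, h2]
    · rw [show (if p = r1 then (1:ℂ) else 0) = 0 from if_neg fun h => h1 h.symm]
      by_cases h2 : r2 = q <;> simp [h1, h2]
  rw [hfun] at heval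
  have hsingle : HasSum (fun r : ι × ι => if r = (p, q) then M (p, q) else 0) (M (p, q)) :=
    hasSum_ite_eq (p, q) (M (p, q))
  simpa [opOfMatrix] using heval.unique hsingle

end OpMatrix

end Aux

section Tensor
open scoped ENNReal
variable {H K : Type*} [NormedAddCommGroup H] [InnerProductSpace ℂ H]
  [NormedAddCommGroup K] [InnerProductSpace ℂ K]

lemma TensorSquare.norm_tmul (τ : TensorSquare H K) (a b : H) :
    ‖τ.tmul a b‖ = ‖a‖ * ‖b‖ := by
  have h : ⟪τ.tmul a b, τ.tmul a b⟫_ℂ = ⟪a, a⟫_ℂ * ⟪b, b⟫_ℂ := τ.inner_tmul a b a b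
  rw [inner_self_eq_norm_sq_to_K, inner_self_eq_norm_sq_to_K, inner_self_eq_norm_sq_to_K] at h
  have h2 : (‖τ.tmul a b‖ : ℝ) ^ 2 = (‖a‖ * ‖b‖) ^ 2 := by
    have h3 : ((‖τ.tmul a b‖ ^ 2 : ℝ) : ℂ) = ((‖a‖ ^ 2 * ‖b‖ ^ 2 : ℝ) : ℂ) := by
      push_cast
      exact h
    have h4 := Complex.ofReal_injective h3
    rw [h4]; ring
  calc ‖τ.tmul a b‖ = Real.sqrt (‖τ.tmul a b‖ ^ 2) := (Real.sqrt_sq (norm_nonneg _)).symm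
    _ = Real.sqrt ((‖a‖ * ‖b‖) ^ 2) := by rw [h2]
    _ = ‖a‖ * ‖b‖ := Real.sqrt_sq (by positivity)

/-- `tmul` as a continuous bilinear map. -/
def TensorSquare.tmulCLM (τ : TensorSquare H K) : H →L[ℂ] H →L[ℂ] K :=
  LinearMap.mkContinuous₂
    (LinearMap.mk₂ ℂ τ.tmul τ.tmul_add_left (fun c a b => τ.tmul_smul_left c a b)
      τ.tmul_add_right (fun c a b => τ.tmul_smul_right c a b)) 1
    (fun a b => by
      show ‖τ.tmul a b‖ ≤ 1 * ‖a‖ * ‖b‖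
      rw [τ.norm_tmul, one_mul])

@[simp] lemma TensorSquare.tmulCLM_apply (τ : TensorSquare H K) (a b : H) :
    τ.tmulCLM a b = τ.tmul a b := rfl

lemma TensorSquare.continuous_tmul_right (τ : TensorSquare H K) (a : H) :
    Continuous fun y => τ.tmul a y := (τ.tmulCLM a).continuous

lemma TensorSquare.continuous_tmul_left (τ : TensorSquare H K) (b : H) :
    Continuous fun x => τ.tmul x b := (τ.tmulCLM.flip b).continuous

variable [CompleteSpace H] [CompleteSpace K]

lemma TensorSquare.orthonormal_pair (τ : TensorSquare H K) {w : Type*}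
    (bH : HilbertBasis w ℂ H) :
    Orthonormal ℂ (fun p : w × w => τ.tmul (bH p.1) (bH p.2)) := by
  classical
  rw [orthonormal_iff_ite]
  have hii := orthonormal_iff_ite.mp bH.orthonormal
  rintro ⟨i, j⟩ ⟨k, l⟩
  rw [τ.inner_tmul, hii, hii]
  by_cases h1 : i = k <;> by_cases h2 : j = l <;>
    simp [h1, h2, Prod.ext_iff]

lemma TensorSquare.dense_pair (τ : TensorSquare H K) {w : Type*}
    (bH : HilbertBasis w ℂ H) :
    ⊤ ≤ (Submodule.span ℂ
      (Set.range fun p : w × w => τ.tmul (bH p.1) (bH p.2))).topologicalClosure := by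
  set V := (Submodule.span ℂ
    (Set.range fun p : w × w => τ.tmul (bH p.1) (bH p.2))).topologicalClosure with hV
  have hVclosed : IsClosed (V : Set K) := Submodule.isClosed_topologicalClosure _
  have hstep1 : ∀ (i : w) (b : H), τ.tmul (bH i) b ∈ V := by
    intro i b
    have hsum : HasSum (fun j => bH.repr b j • τ.tmul (bH i) (bH j)) (τ.tmul (bH i) b) := by
      have := (bH.hasSum_repr b).mapL (τ.tmulCLM (bH i))
      simpa using this
    refine mem_closure_of_tendsto hsum (Filter.Eventually.of_forall fun s => ?_)
    simp only [SetLike.mem_coe]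
    refine Submodule.sum_mem _ fun j _ => Submodule.smul_mem _ _ ?_
    exact Submodule.subset_span (Set.mem_range_self (i, j))
  have hstep2 : ∀ a b : H, τ.tmul a b ∈ V := by
    intro a b
    have hsum : HasSum (fun i => bH.repr a i • τ.tmul (bH i) b) (τ.tmul a b) := by
      have := (bH.hasSum_repr a).mapL (τ.tmulCLM.flip b)
      simpa using this
    refine hVclosed.mem_of_tendsto hsum (Filter.Eventually.of_forall fun s => ?_)
    simp only [SetLike.mem_coe]
    refine Submodule.sum_mem _ fun i _ => Submodule.smul_mem _ _ ?_
    exact hstep1 i b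
  intro x _
  have h1 : Submodule.span ℂ (Set.range fun p : H × H => τ.tmul p.1 p.2) ≤ V := by
    rw [Submodule.span_le]
    rintro _ ⟨⟨a, b⟩, rfl⟩
    exact hstep2 a b
  have h2 : x ∈ closure (Submodule.span ℂ
      (Set.range fun p : H × H => τ.tmul p.1 p.2) : Set K) := τ.dense_span x
  have h3 := closure_mono (h1 : _ ⊆ (V : Set K)) h2
  rwa [hVclosed.closure_eq] at h3

/-- The product Hilbert basis of the tensor square. -/
def TensorSquare.pairBasis (τ : TensorSquare H K) {w : Type*} (bH : HilbertBasis w ℂ H) :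
    HilbertBasis (w × w) ℂ K :=
  HilbertBasis.mk (τ.orthonormal_pair bH) (τ.dense_pair bH)

@[simp] lemma TensorSquare.pairBasis_apply (τ : TensorSquare H K) {w : Type*}
    (bH : HilbertBasis w ℂ H) (p : w × w) :
    τ.pairBasis bH p = τ.tmul (bH p.1) (bH p.2) := by
  rw [TensorSquare.pairBasis, HilbertBasis.coe_mk]

end Tensor


section Extension
variable {H K : Type*} [NormedAddCommGroup H] [InnerProductSpace ℂ H]
  [NormedAddCommGroup K] [InnerProductSpace ℂ K]

lemma ext_zero (σ : ℂ →+* ℂ) (D : H → ℂ) (hcont : Continuous D)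
    (hadd : ∀ x y, D (x + y) = D x + D y)
    (hsmul : ∀ (c : ℂ) (x : H), D (c • x) = σ c * D x)
    {ι : Type*} (v : ι → H)
    (hsp : ⊤ ≤ (Submodule.span ℂ (Set.range v)).topologicalClosure)
    (hz : ∀ i, D (v i) = 0) (x : H) : D x = 0 := by
  have h0 : D 0 = 0 := by
    have := hsmul 0 0
    simpa using this
  have hspan : ∀ y ∈ Submodule.span ℂ (Set.range v), D y = 0 := by
    intro y hy
    induction hy using Submodule.span_induction with
    | mem z hz' => obtain ⟨i, rfl⟩ := hz'; exact hz i
    | zero => exact h0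
    | add a b _ _ ha hb => rw [hadd, ha, hb, add_zero]
    | smul c a _ ha => rw [hsmul, ha, mul_zero]
  have hx : x ∈ closure ((Submodule.span ℂ (Set.range v) : Submodule ℂ H) : Set H) :=
    hsp (Submodule.mem_top : x ∈ ⊤)
  have heq : Set.EqOn D (fun _ => 0)
      ((Submodule.span ℂ (Set.range v) : Submodule ℂ H) : Set H) := fun y hy => hspan y hy
  exact (heq.closure hcont continuous_const) hx

variable [CompleteSpace H] [CompleteSpace K]

lemma crossRelB_of_matrix (τ : TensorSquare H K) (J : H →SL[starRingEnd ℂ] H)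
    {w : Type*} (bH : HilbertBasis w ℂ H) (T Tc : K →L[ℂ] K)
    (h : ∀ i j k l : w,
      ⟪τ.tmul (bH i) (bH j), Tc (τ.tmul (bH k) (bH l))⟫_ℂ
        = ⟪τ.tmul (bH j) (J (bH l)), T (τ.tmul (J (bH i)) (bH k))⟫_ℂ) :
    CrossRelB τ J J T Tc := by
  have hsp : ⊤ ≤ (Submodule.span ℂ (Set.range ⇑bH)).topologicalClosure := bH.dense_span.ge
  -- extend in ψ₂
  have step1 : ∀ (i j k : w) (ψ₂ : H),
      ⟪τ.tmul (bH i) (bH j), Tc (τ.tmul (bH k) ψ₂)⟫_ℂ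
        = ⟪τ.tmul (bH j) (J ψ₂), T (τ.tmul (J (bH i)) (bH k))⟫_ℂ := by
    intro i j k ψ₂
    refine sub_eq_zero.mp (ext_zero (RingHom.id ℂ)
      (fun y => ⟪τ.tmul (bH i) (bH j), Tc (τ.tmul (bH k) y)⟫_ℂ
        - ⟪τ.tmul (bH j) (J y), T (τ.tmul (J (bH i)) (bH k))⟫_ℂ) ?_ ?_ ?_ ⇑bH hsp ?_ ψ₂)
    · exact (Continuous.inner continuous_const
        (Tc.continuous.comp (τ.continuous_tmul_right (bH k)))).sub
        (Continuous.inner ((τ.continuous_tmul_right (bH j)).comp J.continuous)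
          continuous_const)
    · intro x y
      simp only [τ.tmul_add_right, map_add, inner_add_right, inner_add_left]
      ring
    · intro c x
      simp only [τ.tmul_smul_right, map_smul, inner_smul_right, ContinuousLinearMap.map_smulₛₗ,
        τ.tmul_smul_right, inner_smul_left, RingHom.id_apply, starRingEnd_self_apply]
      ring
    · intro l
      rw [h i j k l]
      ring
  -- extend in ψ₁
  have step2 : ∀ (i j : w) (ψ₁ ψ₂ : H),
      ⟪τ.tmul (bH i) (bH j), Tc (τ.tmul ψ₁ ψ₂)⟫_ℂ
        = ⟪τ.tmul (bH j) (J ψ₂), T (τ.tmul (J (bH i)) ψ₁)⟫_ℂ := by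
    intro i j ψ₁ ψ₂
    refine sub_eq_zero.mp (ext_zero (RingHom.id ℂ)
      (fun y => ⟪τ.tmul (bH i) (bH j), Tc (τ.tmul y ψ₂)⟫_ℂ
        - ⟪τ.tmul (bH j) (J ψ₂), T (τ.tmul (J (bH i)) y)⟫_ℂ) ?_ ?_ ?_ ⇑bH hsp ?_ ψ₁)
    · exact (Continuous.inner continuous_const
        (Tc.continuous.comp (τ.continuous_tmul_left ψ₂))).sub
        (Continuous.inner continuous_const
          (T.continuous.comp (τ.continuous_tmul_right (J (bH i)))))
    · intro x y
      simp only [τ.tmul_add_left, τ.tmul_add_right, map_add, inner_add_right]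
      ring
    · intro c x
      simp only [τ.tmul_smul_left, τ.tmul_smul_right, map_smul, inner_smul_right,
        RingHom.id_apply]
      ring
    · intro k
      rw [step1 i j k ψ₂]
      ring
  -- extend in φ₂
  have step3 : ∀ (i : w) (φ₂ ψ₁ ψ₂ : H),
      ⟪τ.tmul (bH i) φ₂, Tc (τ.tmul ψ₁ ψ₂)⟫_ℂ
        = ⟪τ.tmul φ₂ (J ψ₂), T (τ.tmul (J (bH i)) ψ₁)⟫_ℂ := by
    intro i φ₂ ψ₁ ψ₂
    refine sub_eq_zero.mp (ext_zero (starRingEnd ℂ)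
      (fun y => ⟪τ.tmul (bH i) y, Tc (τ.tmul ψ₁ ψ₂)⟫_ℂ
        - ⟪τ.tmul y (J ψ₂), T (τ.tmul (J (bH i)) ψ₁)⟫_ℂ) ?_ ?_ ?_ ⇑bH hsp ?_ φ₂)
    · exact (Continuous.inner (τ.continuous_tmul_right (bH i)) continuous_const).sub
        (Continuous.inner (τ.continuous_tmul_left (J ψ₂)) continuous_const)
    · intro x y
      simp only [τ.tmul_add_right, τ.tmul_add_left, inner_add_left]
      ring
    · intro c x
      simp only [τ.tmul_smul_right, τ.tmul_smul_left, inner_smul_left]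
      ring
    · intro j
      rw [step2 i j ψ₁ ψ₂]
      ring
  -- extend in φ₁
  intro φ₁ φ₂ ψ₁ ψ₂
  refine sub_eq_zero.mp (ext_zero (starRingEnd ℂ)
    (fun y => ⟪τ.tmul y φ₂, Tc (τ.tmul ψ₁ ψ₂)⟫_ℂ
      - ⟪τ.tmul φ₂ (J ψ₂), T (τ.tmul (J y) ψ₁)⟫_ℂ) ?_ ?_ ?_ ⇑bH hsp ?_ φ₁)
  · exact (Continuous.inner (τ.continuous_tmul_left φ₂) continuous_const).sub
      (Continuous.inner continuous_const
        (T.continuous.comp ((τ.tmulCLM.flip ψ₁).continuous.comp J.continuous)))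
  · intro x y
    simp only [τ.tmul_add_left, map_add, inner_add_left, inner_add_right]
    ring
  · intro c x
    simp only [τ.tmul_smul_left, inner_smul_left, ContinuousLinearMap.map_smulₛₗ, map_smul,
      inner_smul_right]
    ring
  · intro i
    rw [step3 i φ₂ ψ₁ ψ₂]
    ring

end Extension


section Glue
open scoped ENNReal
variable {K : Type*} [NormedAddCommGroup K] [InnerProductSpace ℂ K] [CompleteSpace K]
variable {ι : Type*}

lemma HSE_tsum_matrix (b : HilbertBasis ι ℂ K) (T : K →L[ℂ] K) :
    HSE b T = ∑' r : ι × ι, ENNReal.ofReal (‖⟪b r.1, T (b r.2)⟫_ℂ‖ ^ 2) := by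
  rw [HSE_eq_double b b]
  exact Equiv.tsum_eq (Equiv.prodComm ι ι)
    (fun r : ι × ι => ENNReal.ofReal (‖⟪b r.1, T (b r.2)⟫_ℂ‖ ^ 2))

lemma summable_sq_matrix_of (b : HilbertBasis ι ℂ K) (T : K →L[ℂ] K) (h : HSE b T ≠ ⊤) :
    Summable fun r : ι × ι => ‖⟪b r.1, T (b r.2)⟫_ℂ‖ ^ 2 := by
  rw [summable_iff_tsum_ofReal_ne_top (fun r => sq_nonneg _), ← HSE_tsum_matrix]
  exact h

lemma HSE_opOfMatrix (b : HilbertBasis ι ℂ K) {M : ι × ι → ℂ}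
    (hM : Summable fun r => ‖M r‖ ^ 2) :
    HSE b (opOfMatrix ⇑b M) = ∑' r : ι × ι, ENNReal.ofReal (‖M r‖ ^ 2) := by
  rw [HSE_tsum_matrix]
  refine tsum_congr fun r => ?_
  rw [show ⟪b r.1, opOfMatrix ⇑b M (b r.2)⟫_ℂ = M (r.1, r.2) from
    opOfMatrix_inner b.orthonormal hM r.1 r.2]

/-- The index permutation implementing the crossing map on matrices. -/
def crossEquiv (w : Type*) : ((w × w) × (w × w)) ≃ ((w × w) × (w × w)) where
  toFun r := ((r.1.2, r.2.2), (r.1.1, r.2.1))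
  invFun r := ((r.2.1, r.1.1), (r.2.2, r.1.2))
  left_inv := fun ⟨⟨a, b⟩, ⟨c, d⟩⟩ => rfl
  right_inv := fun ⟨⟨a, b⟩, ⟨c, d⟩⟩ => rfl

@[simp] lemma crossEquiv_apply {w : Type*} (r : (w × w) × (w × w)) :
    crossEquiv w r = ((r.1.2, r.2.2), (r.1.1, r.2.1)) := rfl

@[simp] lemma crossEquiv_symm_apply {w : Type*} (r : (w × w) × (w × w)) :
    (crossEquiv w).symm r = ((r.2.1, r.1.1), (r.2.2, r.1.2)) := rfl

end Glue

/-- For an antiunitary involution `J` on a separable Hilbert space, every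
Hilbert–Schmidt operator on `H ⊗ H` is `J`-crossable, and `Cross_J` restricts to a bijective
isometry (a unitary) of the Hilbert–Schmidt class: `‖Cross_J(T)‖₂ = ‖T‖₂`. The
Hilbert–Schmidt property and norm are expressed via a Hilbert basis `bK` of `H ⊗ H`. -/
theorem crossing_unitary_on_hilbert_schmidt
    [NormedAddCommGroup H] [InnerProductSpace ℂ H] [CompleteSpace H]
    [NormedAddCommGroup K] [InnerProductSpace ℂ K] [CompleteSpace K]
    (τ : TensorSquare H K)
    (J : H →SL[starRingEnd ℂ] H)
    (hJinv : ∀ x : H, J (J x) = x)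
    (hJanti : ∀ x y : H, ⟪J x, J y⟫_ℂ = ⟪y, x⟫_ℂ)
    {ι : Type*} (bK : HilbertBasis ι ℂ K) :
    -- every Hilbert–Schmidt operator is J-crossable
    (∀ T : K →L[ℂ] K, Summable (fun i => ‖T (bK i)‖ ^ 2) →
      ∃ Tc : K →L[ℂ] K, CrossRelB τ J J T Tc) ∧
    -- Cross_J is isometric in Hilbert–Schmidt norm
    (∀ T Tc : K →L[ℂ] K, Summable (fun i => ‖T (bK i)‖ ^ 2) → CrossRelB τ J J T Tc →
      Summable (fun i => ‖Tc (bK i)‖ ^ 2) ∧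
      Real.sqrt (∑' i, ‖Tc (bK i)‖ ^ 2) = Real.sqrt (∑' i, ‖T (bK i)‖ ^ 2)) ∧
    -- Cross_J is a bijection of the Hilbert–Schmidt class (surjectivity; injectivity is
    -- automatic from the isometry and linearity of the crossing map)
    (∀ C : K →L[ℂ] K, Summable (fun i => ‖C (bK i)‖ ^ 2) →
      ∃ T : K →L[ℂ] K, Summable (fun i => ‖T (bK i)‖ ^ 2) ∧ CrossRelB τ J J T C) := by
  classical
  obtain ⟨w, bH, hfix⟩ := exists_J_fixed_basis J hJinv hJanti
  set bK' := τ.pairBasis bH with hbK'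
  have hb : ∀ p : w × w, bK' p = τ.tmul (bH p.1) (bH p.2) := τ.pairBasis_apply bH
  have hnn : ∀ (S : K →L[ℂ] K), ∀ i : ι, (0:ℝ) ≤ ‖S (bK i)‖ ^ 2 := fun S i => sq_nonneg _
  -- Part 2 first
  have part2 : ∀ T Tc : K →L[ℂ] K, Summable (fun i => ‖T (bK i)‖ ^ 2) → CrossRelB τ J J T Tc →
      Summable (fun i => ‖Tc (bK i)‖ ^ 2) ∧
      Real.sqrt (∑' i, ‖Tc (bK i)‖ ^ 2) = Real.sqrt (∑' i, ‖T (bK i)‖ ^ 2) := by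
    intro T Tc hT hRel
    have hTm : ∀ p q : w × w, ⟪bK' p, Tc (bK' q)⟫_ℂ = ⟪bK' (p.2, q.2), T (bK' (p.1, q.1))⟫_ℂ := by
      intro p q
      have h := hRel (bH p.1) (bH p.2) (bH q.1) (bH q.2)
      rw [hfix, hfix] at h
      simpa [hb] using h
    have hTne : HSE bK T ≠ ⊤ := (summable_iff_tsum_ofReal_ne_top (hnn T)).mp hT
    have hHSE_Tc : HSE bK' Tc = HSE bK' T := by
      rw [HSE_tsum_matrix bK' Tc, HSE_tsum_matrix bK' T]
      calc ∑' r : (w × w) × (w × w), ENNReal.ofReal (‖⟪bK' r.1, Tc (bK' r.2)⟫_ℂ‖ ^ 2)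
          = ∑' r : (w × w) × (w × w),
            ENNReal.ofReal (‖⟪bK' ((crossEquiv w) r).1, T (bK' ((crossEquiv w) r).2)⟫_ℂ‖ ^ 2) := by
            refine tsum_congr fun r => ?_
            simp only [crossEquiv_apply]
            rw [hTm r.1 r.2]
        _ = ∑' r : (w × w) × (w × w), ENNReal.ofReal (‖⟪bK' r.1, T (bK' r.2)⟫_ℂ‖ ^ 2) :=
            Equiv.tsum_eq (crossEquiv w) (fun r : (w × w) × (w × w) =>
              ENNReal.ofReal (‖⟪bK' r.1, T (bK' r.2)⟫_ℂ‖ ^ 2))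
    have hTcK : HSE bK Tc = HSE bK T := by
      rw [HSE_basis_indep bK bK' Tc, hHSE_Tc, HSE_basis_indep bK' bK T]
    have hSumTc : Summable (fun i => ‖Tc (bK i)‖ ^ 2) := by
      rw [summable_iff_tsum_ofReal_ne_top (hnn Tc)]
      show HSE bK Tc ≠ ⊤
      rw [hTcK]
      exact hTne
    refine ⟨hSumTc, ?_⟩
    rw [tsum_eq_toReal_of_nonneg (hnn Tc) hSumTc, tsum_eq_toReal_of_nonneg (hnn T) hT]
    show Real.sqrt (HSE bK Tc).toReal = Real.sqrt (HSE bK T).toReal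
    rw [hTcK]
  refine ⟨?_, part2, ?_⟩
  · -- existence
    intro T hT
    have hTne : HSE bK T ≠ ⊤ := (summable_iff_tsum_ofReal_ne_top (hnn T)).mp hT
    have hTne' : HSE bK' T ≠ ⊤ := by rw [HSE_basis_indep bK' bK T]; exact hTne
    have hA : Summable fun r : (w × w) × (w × w) => ‖⟪bK' r.1, T (bK' r.2)⟫_ℂ‖ ^ 2 :=
      summable_sq_matrix_of bK' T hTne'
    set M : ((w × w) × (w × w)) → ℂ := fun r => ⟪bK' ((crossEquiv w) r).1, T (bK' ((crossEquiv w) r).2)⟫_ℂ with hM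
    have hMsum : Summable fun r => ‖M r‖ ^ 2 :=
      (Equiv.summable_iff (crossEquiv w)
        (f := fun r : (w × w) × (w × w) => ‖⟪bK' r.1, T (bK' r.2)⟫_ℂ‖ ^ 2)).mpr hA
    refine ⟨opOfMatrix ⇑bK' M, crossRelB_of_matrix τ J bH T _ fun i j k l => ?_⟩
    have h1 : τ.tmul (bH i) (bH j) = bK' (i, j) := (hb (i, j)).symm
    have h2 : τ.tmul (bH k) (bH l) = bK' (k, l) := (hb (k, l)).symm
    rw [h1, h2, opOfMatrix_inner bK'.orthonormal hMsum (i, j) (k, l), hfix, hfix]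
    show ⟪bK' (j, l), T (bK' (i, k))⟫_ℂ = _
    rw [hb (j, l), hb (i, k)]
  · -- surjectivity
    intro C hC
    have hCne : HSE bK C ≠ ⊤ := (summable_iff_tsum_ofReal_ne_top (hnn C)).mp hC
    have hCne' : HSE bK' C ≠ ⊤ := by rw [HSE_basis_indep bK' bK C]; exact hCne
    have hA : Summable fun r : (w × w) × (w × w) => ‖⟪bK' r.1, C (bK' r.2)⟫_ℂ‖ ^ 2 :=
      summable_sq_matrix_of bK' C hCne'
    set M : ((w × w) × (w × w)) → ℂ :=
      fun r => ⟪bK' (((crossEquiv w).symm) r).1, C (bK' (((crossEquiv w).symm) r).2)⟫_ℂ with hM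
    have hMsum : Summable fun r => ‖M r‖ ^ 2 :=
      (Equiv.summable_iff (crossEquiv w).symm
        (f := fun r : (w × w) × (w × w) => ‖⟪bK' r.1, C (bK' r.2)⟫_ℂ‖ ^ 2)).mpr hA
    set T : K →L[ℂ] K := opOfMatrix ⇑bK' M with hTdef
    have hTHS : Summable (fun i => ‖T (bK i)‖ ^ 2) := by
      rw [summable_iff_tsum_ofReal_ne_top (hnn T)]
      show HSE bK T ≠ ⊤
      rw [HSE_basis_indep bK bK' T, hTdef, HSE_opOfMatrix bK' hMsum]
      have heq : ∑' r : (w × w) × (w × w), ENNReal.ofReal (‖M r‖ ^ 2)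
          = HSE bK' C := by
        rw [HSE_tsum_matrix bK' C]
        exact Equiv.tsum_eq (crossEquiv w).symm (fun r : (w × w) × (w × w) =>
          ENNReal.ofReal (‖⟪bK' r.1, C (bK' r.2)⟫_ℂ‖ ^ 2))
      rw [heq]
      exact hCne'
    refine ⟨T, hTHS, crossRelB_of_matrix τ J bH T C fun i j k l => ?_⟩
    have h1 : τ.tmul (bH i) (bH j) = bK' (i, j) := (hb (i, j)).symm
    have h2 : τ.tmul (bH k) (bH l) = bK' (k, l) := (hb (k, l)).symm
    have h3 : τ.tmul (bH j) (bH l) = bK' (j, l) := (hb (j, l)).symm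
    have h4 : τ.tmul (bH i) (bH k) = bK' (i, k) := (hb (i, k)).symm
    rw [h1, h2, hfix, hfix, h3, h4, opOfMatrix_inner bK'.orthonormal hMsum (j, l) (i, k)]
    rfl
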